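/- arXiv:2011.10791 — 2 statements merged into one kernel-verified Lean document; each statement's English description precedes it below -/
import Mathlib

section
/- Let G be a bipartite graph with S ⊆ X, and let P = x_1 y_1 x_2 y_2 ⋯ x_p y_p be a path of even order with x_1, x_p ∈ S and p ≥ 2. Suppose the induced subgraph G[V(P)] contains neither a feasible cycle (a cycle with at least 2 vertices of S) nor a path P' of even order with fewer vertices than P such that S ∩ V(P') = S ∩ V(P). Then within G[V(P)]: d(x_1) = 1, d(x_i) = 2 for every x_i ∈ S ∩ V(P) with x_i ≠ x_1, and d(y_p) ≤ 2. -/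
open SimpleGraph List

set_option linter.unusedSectionVars false
set_option linter.unusedVariables false
set_option maxHeartbeats 1000000

section Helpers

variable {V : Type*} [DecidableEq V] {G : SimpleGraph V} {X Y S : Finset V}

lemma getVert_support_get {a b : V} (p : G.Walk a b) {i : ℕ} (h : i ≤ p.length) :
    p.support[i]? = some (p.getVert i) := by
  induction p generalizing i with
  | nil =>
    simp only [SimpleGraph.Walk.length_nil, Nat.le_zero] at h
    subst h; simp [SimpleGraph.Walk.getVert]
  | cons hadj q ih =>
    cases i with
    | zero => simp
    | succ n =>
      simp only [SimpleGraph.Walk.support_cons, List.getElem?_cons_succ,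
        SimpleGraph.Walk.getVert_cons_succ]
      exact ih (by simpa [Nat.succ_le_iff, SimpleGraph.Walk.length_cons] using h)


lemma bip_parity (hdisj : Disjoint X Y)
    (hbip : ∀ u v : V, G.Adj u v → (u ∈ X ∧ v ∈ Y) ∨ (u ∈ Y ∧ v ∈ X))
    {a b : V} (p : G.Walk a b) : Even p.length ↔ (a ∈ X ↔ b ∈ X) := by
  induction p with
  | nil => simp
  | @cons a c b hadj q ih =>
    have hopp : a ∈ X ↔ ¬ (c ∈ X) := by
      rcases hbip a c hadj with ⟨h1, h2⟩ | ⟨h1, h2⟩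
      · constructor
        · intro _ hc; exact (Finset.disjoint_left.mp hdisj) hc h2
        · intro _; exact h1
      · constructor
        · intro ha; exact absurd ha (Finset.disjoint_right.mp hdisj h1)
        · intro hc; exact absurd h2 hc
    rw [SimpleGraph.Walk.length_cons]
    rw [Nat.even_add_one, ih]
    constructor
    · intro h; by_cases hb : b ∈ X <;> by_cases hc : c ∈ X <;> tauto
    · intro h; by_cases hb : b ∈ X <;> by_cases hc : c ∈ X <;> tauto


lemma head_edge_eq {a b c : V} (p : G.Walk a b) (hp : p.IsPath)
    (h : s(a, c) ∈ p.edges) : c = p.getVert 1 := by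
  cases p with
  | nil => simp at h
  | @cons _ d _ hadj q =>
    simp only [SimpleGraph.Walk.edges_cons, List.mem_cons] at h
    rcases h with h | h
    · rw [Sym2.eq_iff] at h
      rcases h with ⟨-, rfl⟩ | ⟨h1, rfl⟩
      · simp [SimpleGraph.Walk.getVert_cons_succ]
      · exfalso
        rw [SimpleGraph.Walk.cons_isPath_iff] at hp
        exact hp.2 (h1 ▸ q.start_mem_support)
    · exfalso
      have : a ∈ q.support := SimpleGraph.Walk.fst_mem_support_of_mem_edges q h
      rw [SimpleGraph.Walk.cons_isPath_iff] at hp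
      exact hp.2 this


lemma support_take_until {a b c : V} (p : G.Walk a b) (hp : p.IsPath) (h : c ∈ p.support) :
    (p.takeUntil c h).support = p.support.take (p.support.idxOf c + 1) := by
  have hspec := p.take_spec h
  have hsup : p.support = (p.takeUntil c h).support ++ (p.dropUntil c h).support.tail := by
    conv_lhs => rw [← hspec, SimpleGraph.Walk.support_append]
  have hlast : (p.takeUntil c h).support.getLast (SimpleGraph.Walk.support_ne_nil _) = c :=
    SimpleGraph.Walk.getLast_support _
  have hT : (p.takeUntil c h).support =
      (p.takeUntil c h).support.dropLast ++ [c] := by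
    conv_lhs => rw [← List.dropLast_append_getLast (SimpleGraph.Walk.support_ne_nil _), hlast]
  have hnm : c ∉ (p.takeUntil c h).support.dropLast := by
    intro hc
    have hnd : ((p.takeUntil c h).support.dropLast ++
        ([c] ++ (p.dropUntil c h).support.tail)).Nodup := by
      rw [← List.append_assoc, ← hT, ← hsup]; exact hp.support_nodup
    have := (List.nodup_append'.mp hnd).2.2
    exact this hc (by simp)
  have hidx : p.support.idxOf c = (p.takeUntil c h).support.dropLast.length := by
    conv_lhs => rw [hsup, hT, List.append_assoc]
    rw [List.idxOf_append_of_notMem hnm]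
    simp
    rw [(p.dropUntil c h).support_eq_cons]; exact List.idxOf_cons_self
  rw [hidx]
  have hlen : (p.takeUntil c h).support.dropLast.length + 1 = (p.takeUntil c h).support.length := by
    rw [hT]; simp
  rw [hlen, hsup, List.take_left]


lemma support_drop_until {a b c : V} (p : G.Walk a b) (hp : p.IsPath) (h : c ∈ p.support) :
    (p.dropUntil c h).support = p.support.drop (p.support.idxOf c) := by
  have hspec := p.take_spec h
  have hsup : p.support = (p.takeUntil c h).support ++ (p.dropUntil c h).support.tail := by
    conv_lhs => rw [← hspec, SimpleGraph.Walk.support_append]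
  have htake := support_take_until p hp h
  have hlen : (p.takeUntil c h).support.length = p.support.idxOf c + 1 := by
    rw [htake, List.length_take]
    have : p.support.idxOf c < p.support.length := List.idxOf_lt_length_iff.mpr h
    omega
  have h2 : (p.dropUntil c h).support.tail = p.support.drop (p.support.idxOf c + 1) := by
    have key : p.support.drop ((p.takeUntil c h).support.length)
        = (p.dropUntil c h).support.tail := by
      conv_lhs => rw [hsup]
      exact List.drop_left
    rw [← hlen]
    exact key.symm
  rw [(p.dropUntil c h).support_eq_cons, h2]
  rw [List.drop_eq_getElem_cons (List.idxOf_lt_length_iff.mpr h)]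
  congr 1
  exact (List.getElem_idxOf (List.idxOf_lt_length_iff.mpr h)).symm


lemma length_take_until {a b c : V} (p : G.Walk a b) (hp : p.IsPath) (h : c ∈ p.support) :
    (p.takeUntil c h).length = p.support.idxOf c := by
  have := congrArg List.length (support_take_until p hp h)
  rw [SimpleGraph.Walk.length_support, List.length_take, SimpleGraph.Walk.length_support] at this
  have hlt : p.support.idxOf c < p.length + 1 := by
    have := List.idxOf_lt_length_iff.mpr h
    rwa [SimpleGraph.Walk.length_support] at this
  omega


lemma len_split {a b c : V} (p : G.Walk a b) (hp : p.IsPath) (h : c ∈ p.support) :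
    p.support.idxOf c + (p.dropUntil c h).length = p.length := by
  have := congrArg SimpleGraph.Walk.length (p.take_spec h)
  rw [SimpleGraph.Walk.length_append, length_take_until p hp h] at this
  exact this


lemma getVert_dropUntil {a b c : V} (p : G.Walk a b) (hp : p.IsPath) (h : c ∈ p.support)
    {i : ℕ} (hi : i ≤ (p.dropUntil c h).length) :
    (p.dropUntil c h).getVert i = p.getVert (p.support.idxOf c + i) := by
  have hl := len_split p hp h
  have h1 := getVert_support_get (p.dropUntil c h) hi
  have h2 := getVert_support_get p (i := p.support.idxOf c + i) (by omega)
  rw [support_drop_until p hp h, List.getElem?_drop] at h1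
  rw [h1] at h2
  exact Option.some_injective _ h2


lemma mem_take_indexOf {c : V} {L : List V} (hnd : L.Nodup) {t : ℕ} (h : c ∈ L.take t) :
    L.idxOf c < t := by
  obtain ⟨i, hi, hget⟩ := List.getElem_of_mem h
  rw [List.getElem_take] at hget
  rw [List.length_take] at hi
  subst hget
  rw [List.Nodup.idxOf_getElem hnd]
  omega


lemma getVert_mem_support {a b : V} (p : G.Walk a b) {i : ℕ} (h : i ≤ p.length) :
    p.getVert i ∈ p.support :=
  SimpleGraph.Walk.mem_support_iff_exists_getVert.mpr ⟨i, rfl, h⟩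


lemma indexOf_getVert {a b : V} (p : G.Walk a b) (hp : p.IsPath) {i : ℕ} (h : i ≤ p.length) :
    p.support.idxOf (p.getVert i) = i := by
  have hi : i < p.support.length := by rw [SimpleGraph.Walk.length_support]; omega
  have : p.support[i] = p.getVert i := by
    have := getVert_support_get p h
    rw [List.getElem?_eq_getElem hi] at this
    exact Option.some_injective _ this
  rw [← this]
  exact List.Nodup.idxOf_getElem hp.support_nodup i hi


lemma getVert_inj {a b : V} (p : G.Walk a b) (hp : p.IsPath) {i j : ℕ}
    (hi : i ≤ p.length) (hj : j ≤ p.length) (h : p.getVert i = p.getVert j) : i = j := by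
  have h1 := indexOf_getVert p hp hi
  have h2 := indexOf_getVert p hp hj
  rw [h] at h1; omega


lemma getVert_eq_indexOf {a b : V} (p : G.Walk a b) (hp : p.IsPath) {c : V}
    (h : c ∈ p.support) : p.getVert (p.support.idxOf c) = c := by
  have hlt : p.support.idxOf c < p.support.length := List.idxOf_lt_length_iff.mpr h
  have hle : p.support.idxOf c ≤ p.length := by
    rw [SimpleGraph.Walk.length_support] at hlt; omega
  have := getVert_support_get p hle
  rw [List.getElem?_eq_getElem hlt, List.getElem_idxOf hlt] at this
  exact (Option.some_injective _ this).symm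


lemma mem_drop_of_le_indexOf {c : V} {L : List V} (h : c ∈ L) {i : ℕ} (hi : i ≤ L.idxOf c) :
    c ∈ L.drop i := by
  have hlt : L.idxOf c < L.length := List.idxOf_lt_length_iff.mpr h
  have : (L.drop i)[L.idxOf c - i]'(by rw [List.length_drop]; omega) = c := by
    rw [List.getElem_drop]
    have heq : i + (L.idxOf c - i) = L.idxOf c := by omega
    simp only [heq]
    exact List.getElem_idxOf hlt
  rw [← this]
  exact List.getElem_mem _


lemma chord {X Y S : Finset V} (hdisj : Disjoint X Y)
    (hbip : ∀ u v : V, G.Adj u v → (u ∈ X ∧ v ∈ Y) ∨ (u ∈ Y ∧ v ∈ X))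
    {x₁ yp : V} {P : G.Walk x₁ yp} (hP : P.IsPath) (hPeven : Even P.support.length)
    (hnocycle : ¬ ∃ (u : V) (c : G.Walk u u), c.IsCycle ∧
      c.support.toFinset ⊆ P.support.toFinset ∧
      2 ≤ (S ∩ c.support.toFinset).card)
    (hnoshort : ¬ ∃ (a b : V) (Q : G.Walk a b), Q.IsPath ∧
      Q.support.toFinset ⊆ P.support.toFinset ∧
      Even Q.support.length ∧ Q.support.length < P.support.length ∧
      S ∩ Q.support.toFinset = S ∩ P.support.toFinset)
    (v w : V) (hv : v ∈ P.support)
    (hwD : w ∈ (P.dropUntil v hv).support) (hne : w ≠ v) (hadj : G.Adj v w)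
    (hsnd : w ≠ (P.dropUntil v hv).getVert 1) (hS : v ∈ S ∨ w ∈ S) : False := by
  set D := P.dropUntil v hv with hD
  set T := P.takeUntil v hv with hT
  have hDpath : D.IsPath := hP.dropUntil hv
  have hTpath : T.IsPath := hP.takeUntil hv
  set M := D.takeUntil w hwD with hM
  set E := D.dropUntil w hwD with hE
  have hMpath : M.IsPath := hDpath.takeUntil hwD
  have hEpath : E.IsPath := hDpath.dropUntil hwD
  have hMnn : ¬ M.Nil := SimpleGraph.Walk.not_nil_of_ne (fun h => hne h.symm)
  have hMlen1 : 1 ≤ M.length := SimpleGraph.Walk.not_nil_iff_lt_length.mp hMnn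
  have hDspec : M.append E = D := D.take_spec hwD
  have hM1 : M.getVert 1 = D.getVert 1 := by
    rw [← hDspec, SimpleGraph.Walk.getVert_append]
    rcases lt_or_ge 1 M.length with h | h
    · simp [h]
    · have hlen : M.length = 1 := by omega
      have hnlt : ¬ (1 < M.length) := by omega
      simp only [hnlt, if_false, hlen, Nat.sub_self, SimpleGraph.Walk.getVert_zero]
      rw [← hlen]; simp [M.getVert_length]
  have hMsnd : s(w, v) ∉ M.edges := by
    intro hmem
    rw [Sym2.eq_swap] at hmem
    have := head_edge_eq M hMpath hmem
    rw [hM1] at this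
    exact hsnd this
  set c : G.Walk w w := SimpleGraph.Walk.cons hadj.symm M with hc
  have hcyc : c.IsCycle := (SimpleGraph.Walk.cons_isCycle_iff M hadj.symm).mpr ⟨hMpath, hMsnd⟩
  have hMsubP : M.support ⊆ P.support := fun z hz =>
    P.support_dropUntil_subset hv (D.support_takeUntil_subset hwD hz)
  have hcsub : c.support.toFinset ⊆ P.support.toFinset := by
    intro z hz
    rw [List.mem_toFinset] at *
    rw [hc, SimpleGraph.Walk.support_cons, List.mem_cons] at hz
    rcases hz with rfl | hz
    · exact hMsubP (M.end_mem_support)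
    · exact hMsubP hz
  -- choose s₀
  obtain ⟨s₀, hs₀S, hs₀M, hs₀Q⟩ :
      ∃ s₀, s₀ ∈ S ∧ s₀ ∈ M.support ∧ (s₀ = v ∨ s₀ = w) := by
    rcases hS with h | h
    · exact ⟨v, h, M.start_mem_support, Or.inl rfl⟩
    · exact ⟨w, h, M.end_mem_support, Or.inr rfl⟩
  have hOnly : ∀ s ∈ S, s ∈ M.support → s = s₀ := by
    intro s hs hsM
    by_contra hne'
    apply hnocycle
    refine ⟨w, c, hcyc, hcsub, ?_⟩
    apply Finset.one_lt_card.mpr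
    refine ⟨s, ?_, s₀, ?_, hne'⟩
    · rw [Finset.mem_inter, List.mem_toFinset]
      exact ⟨hs, by rw [hc, SimpleGraph.Walk.support_cons]; exact List.mem_cons_of_mem _ hsM⟩
    · rw [Finset.mem_inter, List.mem_toFinset]
      exact ⟨hs₀S, by rw [hc, SimpleGraph.Walk.support_cons]; exact List.mem_cons_of_mem _ hs₀M⟩
  -- the shortcut path
  set Q : G.Walk x₁ yp := T.append (SimpleGraph.Walk.cons hadj E) with hQ
  have hQsup : Q.support = T.support ++ E.support := by
    rw [hQ, SimpleGraph.Walk.support_append, SimpleGraph.Walk.support_cons, List.tail_cons]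
  have hPsup : P.support = T.support ++ (M.support.tail ++ E.support.tail) := by
    conv_lhs => rw [← P.take_spec hv]
    rw [SimpleGraph.Walk.support_append, ← hT, ← hD, ← hDspec,
      SimpleGraph.Walk.tail_support_append]
  have hwMt : w ∈ M.support.tail := by
    have h1 := M.end_mem_support
    rw [M.support_eq_cons, List.mem_cons] at h1
    rcases h1 with h1 | h1
    · exact absurd h1 hne
    · exact h1
  have hnodupP : (T.support ++ (M.support.tail ++ E.support.tail)).Nodup := by
    rw [← hPsup]; exact hP.support_nodup
  rw [List.nodup_append'] at hnodupP
  obtain ⟨hndT, hndME, hdisjTME⟩ := hnodupP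
  have hQnodup : Q.support.Nodup := by
    rw [hQsup, List.nodup_append']
    refine ⟨hndT, hEpath.support_nodup, ?_⟩
    intro z hzT hzE
    rw [E.support_eq_cons, List.mem_cons] at hzE
    rcases hzE with rfl | hzE
    · exact hdisjTME hzT (List.mem_append_left _ hwMt)
    · exact hdisjTME hzT (List.mem_append_right _ hzE)
  have hQpath : Q.IsPath := SimpleGraph.Walk.IsPath.mk' hQnodup
  have hQsubP : Q.support ⊆ P.support := by
    intro z hz
    rw [hQsup, List.mem_append] at hz
    rw [hPsup, List.mem_append]
    rcases hz with hz | hz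
    · exact Or.inl hz
    · rw [E.support_eq_cons, List.mem_cons] at hz
      rcases hz with rfl | hz
      · exact Or.inr (List.mem_append_left _ hwMt)
      · exact Or.inr (List.mem_append_right _ hz)
  have hQsub : Q.support.toFinset ⊆ P.support.toFinset := by
    intro z hz; rw [List.mem_toFinset] at *; exact hQsubP hz
  -- parity
  have hQeven : Even Q.support.length := by
    have h1 := bip_parity (G := G) hdisj hbip P
    have h2 := bip_parity (G := G) hdisj hbip Q
    rw [SimpleGraph.Walk.length_support] at hPeven ⊢
    have hPodd : ¬ Even P.length := by
      intro h; rw [Nat.even_add_one] at hPeven; exact hPeven h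
    have : ¬ Even Q.length := fun h => hPodd (h1.mpr (h2.mp h))
    rw [Nat.even_add_one]; exact this
  -- shorter
  have hMlen2 : 2 ≤ M.length := by
    rcases Nat.lt_or_ge M.length 2 with h | h
    · exfalso
      have hlen : M.length = 1 := by omega
      apply hsnd
      rw [← hM1, ← hlen]
      exact M.getVert_length.symm
    · exact h
  have hQshort : Q.support.length < P.support.length := by
    rw [hQsup, hPsup, List.length_append, List.length_append, List.length_append]
    have h1 : M.support.tail.length = M.length := by
      rw [List.length_tail, SimpleGraph.Walk.length_support]; omega
    have h2 : E.support.length = E.support.tail.length + 1 := by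
      rw [E.support_eq_cons]; simp
    omega
  -- same S-sets
  have hSeq : S ∩ Q.support.toFinset = S ∩ P.support.toFinset := by
    ext z
    simp only [Finset.mem_inter, List.mem_toFinset]
    constructor
    · rintro ⟨hzS, hzQ⟩; exact ⟨hzS, hQsubP hzQ⟩
    · rintro ⟨hzS, hzP⟩
      refine ⟨hzS, ?_⟩
      rw [hPsup, List.mem_append, List.mem_append] at hzP
      rw [hQsup, List.mem_append]
      rcases hzP with hz | hz | hz
      · exact Or.inl hz
      · have hzM : z ∈ M.support := List.mem_of_mem_tail hz
        have := hOnly z hzS hzM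
        subst this
        rcases hs₀Q with rfl | rfl
        · exact Or.inl T.end_mem_support
        · exact Or.inr E.start_mem_support
      · exact Or.inr (by rw [E.support_eq_cons]; exact List.mem_cons_of_mem _ hz)
  exact hnoshort ⟨x₁, yp, Q, hQpath, hQsub, hQeven, hQshort, hSeq⟩


lemma extra_cycle_only {X Y S : Finset V} (hdisj : Disjoint X Y)
    (hbip : ∀ u v : V, G.Adj u v → (u ∈ X ∧ v ∈ Y) ∨ (u ∈ Y ∧ v ∈ X))
    {x₁ xp yp : V} {P : G.Walk x₁ yp} (hP : P.IsPath)
    {l : List V} (hsplit : P.support = l ++ [xp, yp]) (hxp : xp ∈ S)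
    (hnocycle : ¬ ∃ (u : V) (c : G.Walk u u), c.IsCycle ∧
      c.support.toFinset ⊆ P.support.toFinset ∧
      2 ≤ (S ∩ c.support.toFinset).card)
    (hxpi : P.support.idxOf xp = P.length - 1) (hllen : l.length = P.length - 1)
    (hn3 : 3 ≤ P.length)
    (u : V) (hu : u ∈ P.support) (hadj : G.Adj yp u) (hune : u ≠ xp) :
    (∀ s ∈ S, s ∈ (P.dropUntil u hu).support → s = xp) := by
  have hney : u ≠ yp := hadj.ne'
  have hul : u ∈ l := by
    rw [hsplit, List.mem_append] at hu
    rcases hu with h | h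
    · exact h
    · exfalso; simp only [List.mem_cons, List.mem_singleton] at h; tauto
  have hm : P.support.idxOf u < P.length - 1 := by
    rw [hsplit, List.idxOf_append_of_mem hul, ← hllen]
    exact List.idxOf_lt_length_iff.mpr hul
  set m := P.support.idxOf u with hmdef
  set D := P.dropUntil u hu with hD
  have hDpath : D.IsPath := hP.dropUntil hu
  have hDlen : m + D.length = P.length := len_split P hP hu
  -- the chord edge is not an edge of D
  have hedge : s(yp, u) ∉ D.edges := by
    intro hmem
    have hmem' : s(yp, u) ∈ D.reverse.edges := by
      rw [SimpleGraph.Walk.edges_reverse, List.mem_reverse]; exact hmem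
    have h2 := head_edge_eq D.reverse (hDpath.reverse) hmem'
    rw [SimpleGraph.Walk.getVert_reverse] at h2
    have hlen1 : D.length - 1 ≤ D.length := by omega
    have h3 : D.getVert (D.length - 1) = P.getVert (m + (D.length - 1)) := by
      rw [hmdef]; exact getVert_dropUntil P hP hu hlen1
    have h4 : m + (D.length - 1) = P.length - 1 := by omega
    have h5 : P.support.idxOf u = P.length - 1 := by
      conv_lhs => rw [h2, h3, h4]
      exact indexOf_getVert P hP (by omega)
    omega
  set c : G.Walk yp yp := SimpleGraph.Walk.cons hadj D with hc
  have hcyc : c.IsCycle := (SimpleGraph.Walk.cons_isCycle_iff D hadj).mpr ⟨hDpath, hedge⟩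
  have hcsub : c.support.toFinset ⊆ P.support.toFinset := by
    intro z hz
    rw [List.mem_toFinset] at *
    rw [hc, SimpleGraph.Walk.support_cons, List.mem_cons] at hz
    rcases hz with rfl | hz
    · exact P.end_mem_support
    · exact P.support_dropUntil_subset hu hz
  have hxpD : xp ∈ D.support := by
    rw [hD, support_drop_until P hP hu]
    exact mem_drop_of_le_indexOf (by rw [hsplit]; simp) (by omega)
  intro s hs hsD
  by_contra hne'
  apply hnocycle
  refine ⟨yp, c, hcyc, hcsub, ?_⟩
  apply Finset.one_lt_card.mpr
  refine ⟨s, ?_, xp, ?_, hne'⟩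
  · rw [Finset.mem_inter, List.mem_toFinset]
    exact ⟨hs, by rw [hc, SimpleGraph.Walk.support_cons]; exact List.mem_cons_of_mem _ hsD⟩
  · rw [Finset.mem_inter, List.mem_toFinset]
    exact ⟨hxp, by rw [hc, SimpleGraph.Walk.support_cons]; exact List.mem_cons_of_mem _ hxpD⟩


lemma two_extras_lt {X Y S : Finset V} (hdisj : Disjoint X Y)
    (hbip : ∀ u v : V, G.Adj u v → (u ∈ X ∧ v ∈ Y) ∨ (u ∈ Y ∧ v ∈ X))
    {x₁ xp yp : V} {P : G.Walk x₁ yp} (hP : P.IsPath) (hPeven : Even P.support.length)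
    {l : List V} (hsplit : P.support = l ++ [xp, yp]) (hxp : xp ∈ S)
    (hnocycle : ¬ ∃ (u : V) (c : G.Walk u u), c.IsCycle ∧
      c.support.toFinset ⊆ P.support.toFinset ∧
      2 ≤ (S ∩ c.support.toFinset).card)
    (hnoshort : ¬ ∃ (a b : V) (Q : G.Walk a b), Q.IsPath ∧
      Q.support.toFinset ⊆ P.support.toFinset ∧
      Even Q.support.length ∧ Q.support.length < P.support.length ∧
      S ∩ Q.support.toFinset = S ∩ P.support.toFinset)
    (hxpi : P.support.idxOf xp = P.length - 1) (hllen : l.length = P.length - 1)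
    (hn3 : 3 ≤ P.length) (hx₁X : x₁ ∈ X) (hypX : yp ∉ X)
    (u w : V) (hu : u ∈ P.support) (hw : w ∈ P.support)
    (hadju : G.Adj yp u) (hadjw : G.Adj yp w)
    (hune : u ≠ xp) (hwne : w ≠ xp)
    (hlt : P.support.idxOf u < P.support.idxOf w) : False := by
  set m := P.support.idxOf u with hmdef
  set j := P.support.idxOf w with hjdef
  have hwl : w ∈ l := by
    rw [hsplit, List.mem_append] at hw
    rcases hw with h | h
    · exact h
    · exfalso
      simp only [List.mem_cons, List.mem_singleton] at h
      rcases h with rfl | rfl | h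
      · exact hwne rfl
      · exact hadjw.ne rfl
      · exact absurd h List.not_mem_nil
  have hjl : j < P.length - 1 := by
    rw [hjdef, hsplit, List.idxOf_append_of_mem hwl, ← hllen]
    exact List.idxOf_lt_length_iff.mpr hwl
  have hOnly := extra_cycle_only hdisj hbip hP hsplit hxp hnocycle hxpi hllen hn3
      u hu hadju hune
  set Du := P.dropUntil u hu with hDu
  have hDupath : Du.IsPath := hP.dropUntil hu
  have hDulen : m + Du.length = P.length := len_split P hP hu
  have hwDu : w ∈ Du.support := by
    rw [hDu, support_drop_until P hP hu]
    exact mem_drop_of_le_indexOf hw (le_of_lt hlt)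
  have hlink1 : (P.dropUntil u hu).length = Du.length := rfl
  -- index of w inside Du
  have hjdu : Du.support.idxOf w = j - m := by
    have h1 : Du.getVert (j - m) = w := by
      rw [hDu, getVert_dropUntil P hP hu (by omega)]
      have : m + (j - m) = j := by omega
      rw [this, hjdef]
      exact getVert_eq_indexOf P hP hw
    conv_lhs => rw [← h1]
    exact indexOf_getVert Du hDupath (by omega)
  set T := P.takeUntil u hu with hT
  have hTpath : T.IsPath := hP.takeUntil hu
  set W' := Du.takeUntil w hwDu with hW'
  set R := Du.dropUntil w hwDu with hR
  have hW'path : W'.IsPath := hDupath.takeUntil hwDu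
  have hRpath : R.IsPath := hDupath.dropUntil hwDu
  have hlink2 : (Du.dropUntil w hwDu).length = R.length := rfl
  have hlink3 : (Du.takeUntil w hwDu).length = W'.length := rfl
  have hRlen : (j - m) + R.length = Du.length := by
    have := len_split Du hDupath hwDu
    rw [hjdu] at this; exact this
  have hRnn : ¬ R.Nil := SimpleGraph.Walk.not_nil_of_ne hadjw.ne'
  have hRlen1 : 1 ≤ R.length := SimpleGraph.Walk.not_nil_iff_lt_length.mp hRnn
  -- R.getVert 1 = P.getVert (j+1)
  have hRsnd : R.getVert 1 = P.getVert (j + 1) := by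
    rw [hR, getVert_dropUntil Du hDupath hwDu (by omega), hjdu]
    rw [hDu, getVert_dropUntil P hP hu (by omega)]
    congr 1; omega
  set R₂ := R.tail with hR₂
  have hR₂sup : R₂.support = R.support.tail := SimpleGraph.Walk.support_tail_of_not_nil R hRnn
  -- the shortcut walk
  set Q : G.Walk x₁ (R.getVert 1) := T.append (SimpleGraph.Walk.cons hadju.symm R₂.reverse)
    with hQ
  have hQsup : Q.support = T.support ++ R.support.tail.reverse := by
    rw [hQ, SimpleGraph.Walk.support_append, SimpleGraph.Walk.support_cons, List.tail_cons,
      SimpleGraph.Walk.support_reverse, hR₂sup]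
  have hDuspec : W'.append R = Du := Du.take_spec hwDu
  have hPsup : P.support = T.support ++ (W'.support.tail ++ R.support.tail) := by
    conv_lhs => rw [← P.take_spec hu]
    rw [SimpleGraph.Walk.support_append, ← hT, ← hDu, ← hDuspec,
      SimpleGraph.Walk.tail_support_append]
  have hnodupP : (T.support ++ (W'.support.tail ++ R.support.tail)).Nodup := by
    rw [← hPsup]; exact hP.support_nodup
  rw [List.nodup_append'] at hnodupP
  obtain ⟨hndT, hndWR, hdisjT⟩ := hnodupP
  rw [List.nodup_append'] at hndWR
  obtain ⟨hndW, hndR, hdisjWR⟩ := hndWR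
  have hQnodup : Q.support.Nodup := by
    rw [hQsup, List.nodup_append']
    refine ⟨hndT, List.nodup_reverse.mpr hndR, ?_⟩
    intro z hzT hzR
    rw [List.mem_reverse] at hzR
    exact hdisjT hzT (List.mem_append_right _ hzR)
  have hQpath : Q.IsPath := SimpleGraph.Walk.IsPath.mk' hQnodup
  have hQsubP : Q.support ⊆ P.support := by
    intro z hz
    rw [hQsup, List.mem_append] at hz
    rw [hPsup, List.mem_append]
    rcases hz with hz | hz
    · exact Or.inl hz
    · rw [List.mem_reverse] at hz
      exact Or.inr (List.mem_append_right _ hz)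
  have hQsub : Q.support.toFinset ⊆ P.support.toFinset := by
    intro z hz; rw [List.mem_toFinset] at *; exact hQsubP hz
  -- parity
  have hwX : w ∈ X := by
    rcases hbip yp w hadjw with ⟨h1, _⟩ | ⟨_, h2⟩
    · exact absurd h1 hypX
    · exact h2
  have hRsndX : R.getVert 1 ∉ X := by
    have hadj2 : G.Adj w (P.getVert (j + 1)) := by
      have := P.adj_getVert_succ (i := j) (by omega)
      have hgj : P.getVert j = w := by rw [hjdef]; exact getVert_eq_indexOf P hP hw
      rwa [hgj] at this
    rcases hbip w (P.getVert (j+1)) hadj2 with ⟨_, h2⟩ | ⟨h1, _⟩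
    · rw [hRsnd]; exact fun hc => (Finset.disjoint_left.mp hdisj) hc h2
    · exact absurd hwX (Finset.disjoint_right.mp hdisj h1)
  have hQeven : Even Q.support.length := by
    have h1 := bip_parity (G := G) hdisj hbip P
    have h2 := bip_parity (G := G) hdisj hbip Q
    rw [SimpleGraph.Walk.length_support] at hPeven ⊢
    have hPodd : ¬ Even P.length := by
      rw [Nat.even_add_one] at hPeven
      intro h; exact hPeven h
    have hiff : (x₁ ∈ X ↔ yp ∈ X) ↔ (x₁ ∈ X ↔ R.getVert 1 ∈ X) := by
      constructor
      · intro h; constructor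
        · intro hx; exact absurd (h.mp hx) hypX
        · intro hx; exact absurd hx hRsndX
      · intro h; constructor
        · intro hx; exact absurd (h.mp hx) hRsndX
        · intro hx; exact absurd hx hypX
    have : ¬ Even Q.length := fun h => hPodd (h1.mpr (hiff.mpr (h2.mp h)))
    rw [Nat.even_add_one]; exact this
  -- shorter
  have hW'len1 : 1 ≤ W'.length := by
    have h0 : (Du.takeUntil w hwDu).length = j - m := by
      rw [length_take_until Du hDupath hwDu, hjdu]
    rw [← hlink3]; omega
  have hQshort : Q.support.length < P.support.length := by
    rw [hQsup, hPsup]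
    simp only [List.length_append, List.length_reverse]
    have h1 : W'.support.tail.length = W'.length := by
      rw [List.length_tail, SimpleGraph.Walk.length_support]; omega
    have h2 : R.support.tail.length = R.length := by
      rw [List.length_tail, SimpleGraph.Walk.length_support]; omega
    omega
  -- xp is in R's tail
  have hxpDu : xp ∈ Du.support := by
    rw [hDu, support_drop_until P hP hu]
    exact mem_drop_of_le_indexOf (by rw [hsplit]; simp) (by omega)
  have hxpR : xp ∈ R.support.tail := by
    have hsplit2 : Du.support = W'.support ++ R.support.tail := by
      rw [← hDuspec, SimpleGraph.Walk.support_append]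
    have hxpW' : xp ∉ W'.support := by
      intro hc
      rw [hW', support_take_until Du hDupath hwDu, hjdu] at hc
      have := mem_take_indexOf hDupath.support_nodup hc
      have hxpdu : Du.support.idxOf xp = P.length - 1 - m := by
        have hg : Du.getVert (P.length - 1 - m) = xp := by
          rw [hDu, getVert_dropUntil P hP hu (by omega)]
          have heq : m + (P.length - 1 - m) = P.length - 1 := by omega
          rw [heq, ← hxpi]
          exact getVert_eq_indexOf P hP (by rw [hsplit]; simp)
        conv_lhs => rw [← hg]
        exact indexOf_getVert Du hDupath (by omega)
      omega
    rw [hsplit2, List.mem_append] at hxpDu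
    tauto
  -- S equality
  have hSeq : S ∩ Q.support.toFinset = S ∩ P.support.toFinset := by
    ext z
    simp only [Finset.mem_inter, List.mem_toFinset]
    constructor
    · rintro ⟨hzS, hzQ⟩; exact ⟨hzS, hQsubP hzQ⟩
    · rintro ⟨hzS, hzP⟩
      refine ⟨hzS, ?_⟩
      rw [hPsup, List.mem_append, List.mem_append] at hzP
      rw [hQsup, List.mem_append]
      rcases hzP with hz | hz | hz
      · exact Or.inl hz
      · -- z on the skipped segment: z is an S-vertex of Du, so z = xp
        have hzDu : z ∈ Du.support := by
          rw [← hDuspec, SimpleGraph.Walk.support_append, List.mem_append]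
          exact Or.inl (List.mem_of_mem_tail hz)
        have := hOnly z hzS hzDu
        subst this
        exact Or.inr (List.mem_reverse.mpr hxpR)
      · exact Or.inr (List.mem_reverse.mpr hz)
  exact hnoshort ⟨x₁, R.getVert 1, Q, hQpath, hQsub, hQeven, hQshort, hSeq⟩

end Helpers

/-- Lemma 5: let P = x₁y₁⋯x_p y_p be a path of even order (p ≥ 2) with
x₁, x_p ∈ S, such that G[V(P)] contains no feasible cycle and no shorter path
of even order with the same set of S-vertices. Then, in G[V(P)],
d(x₁) = 1, d(x) = 2 for every x ∈ S ∩ V(P) with x ≠ x₁, and d(y_p) ≤ 2. -/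
theorem path_degrees {V : Type*} [Fintype V] [DecidableEq V]
    (G : SimpleGraph V) [DecidableRel G.Adj]
    (X Y S : Finset V)
    (hdisj : Disjoint X Y) (hcover : X ∪ Y = Finset.univ)
    (hbip : ∀ u v : V, G.Adj u v → (u ∈ X ∧ v ∈ Y) ∨ (u ∈ Y ∧ v ∈ X))
    (hSX : S ⊆ X)
    (x₁ xp yp : V) (P : G.Walk x₁ yp) (hP : P.IsPath)
    (hPeven : Even P.support.length) (hPlen : 4 ≤ P.support.length)
    (l : List V) (hsplit : P.support = l ++ [xp, yp])
    (hx₁ : x₁ ∈ S) (hxp : xp ∈ S)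
    (hnocycle : ¬ ∃ (u : V) (c : G.Walk u u), c.IsCycle ∧
      c.support.toFinset ⊆ P.support.toFinset ∧
      2 ≤ (S ∩ c.support.toFinset).card)
    (hnoshort : ¬ ∃ (a b : V) (Q : G.Walk a b), Q.IsPath ∧
      Q.support.toFinset ⊆ P.support.toFinset ∧
      Even Q.support.length ∧ Q.support.length < P.support.length ∧
      S ∩ Q.support.toFinset = S ∩ P.support.toFinset) :
    (P.support.toFinset.filter (fun u => G.Adj x₁ u)).card = 1 ∧
    (∀ x ∈ S, x ∈ P.support → x ≠ x₁ →
      (P.support.toFinset.filter (fun u => G.Adj x u)).card = 2) ∧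
    (P.support.toFinset.filter (fun u => G.Adj yp u)).card ≤ 2 := by
  have hsuplen : P.support.length = P.length + 1 := P.length_support
  have hn3 : 3 ≤ P.length := by omega
  have hx₁X : x₁ ∈ X := hSX hx₁
  have hPodd : ¬ Even P.length := by
    rw [hsuplen, Nat.even_add_one] at hPeven
    intro h; exact hPeven h
  have hypX : yp ∉ X := by
    intro hyX
    exact hPodd ((bip_parity hdisj hbip P).mpr ⟨fun _ => hyX, fun _ => hx₁X⟩)
  have hidx0 : P.support.idxOf x₁ = 0 := by
    have := indexOf_getVert P hP (i := 0) (by omega)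
    rwa [P.getVert_zero] at this
  have hllen : l.length = P.length - 1 := by
    have := congrArg List.length hsplit
    rw [hsuplen] at this
    simp [List.length_append] at this
    omega
  have hxpgv : P.getVert (P.length - 1) = xp := by
    have h1 := getVert_support_get P (i := P.length - 1) (by omega)
    have h2 : P.support[P.length - 1]? = some xp := by
      rw [hsplit, ← hllen]
      rw [List.getElem?_append_right (le_refl _)]
      simp
    rw [h2] at h1
    exact (Option.some_injective _ h1).symm
  have hxpi : P.support.idxOf xp = P.length - 1 := by
    rw [← hxpgv]; exact indexOf_getVert P hP (by omega)
  refine ⟨?_, ?_, ?_⟩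
  · -- d(x₁) = 1
    have hset : P.support.toFinset.filter (fun u => G.Adj x₁ u) = {P.getVert 1} := by
      ext u
      simp only [Finset.mem_filter, List.mem_toFinset, Finset.mem_singleton]
      constructor
      · rintro ⟨humem, hadj⟩
        by_contra hne1
        have hgu : P.getVert (P.support.idxOf u) = u := getVert_eq_indexOf P hP humem
        have hmle : P.support.idxOf u ≤ P.length := by
          have := List.idxOf_lt_length_iff.mpr humem
          omega
        have hm0 : P.support.idxOf u ≠ 0 := by
          intro h
          apply hadj.ne
          rw [← hgu, h, P.getVert_zero]
        have hm1 : P.support.idxOf u ≠ 1 := by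
          intro h
          exact hne1 (by rw [← hgu, h])
        have hDlen := len_split P hP P.start_mem_support
        rw [hidx0] at hDlen
        refine chord (Y := Y) hdisj hbip hP hPeven hnocycle hnoshort x₁ u
          P.start_mem_support ?_ hadj.ne' hadj ?_ (Or.inl hx₁)
        · rw [support_drop_until P hP P.start_mem_support, hidx0]
          simpa using humem
        · intro heq
          have hD1 : (P.dropUntil x₁ P.start_mem_support).getVert 1 = P.getVert 1 := by
            rw [getVert_dropUntil P hP P.start_mem_support (by omega), hidx0]
          apply hm1
          rw [heq, hD1, indexOf_getVert P hP (by omega)]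
      · rintro rfl
        refine ⟨getVert_mem_support P (by omega), ?_⟩
        have := P.adj_getVert_succ (i := 0) (by omega)
        rwa [P.getVert_zero] at this
    rw [hset]
    exact Finset.card_singleton _
  · -- d(x) = 2 for x ∈ S, x ≠ x₁
    intro x hxS hxsupp hxne
    have hgx : P.getVert (P.support.idxOf x) = x := getVert_eq_indexOf P hP hxsupp
    set k := P.support.idxOf x with hkdef
    have hkle : k ≤ P.length := by
      have := List.idxOf_lt_length_iff.mpr hxsupp
      omega
    have hk1 : 1 ≤ k := by
      rcases Nat.eq_zero_or_pos k with h | h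
      · exfalso; apply hxne; rw [← hgx, h, P.getVert_zero]
      · exact h
    have hkn : k < P.length := by
      rcases Nat.lt_or_ge k P.length with h | h
      · exact h
      · exfalso
        have : k = P.length := by omega
        apply hypX
        have : x = yp := by rw [← hgx, this, P.getVert_length]
        rw [← this]
        exact hSX hxS
    have hprevadj : G.Adj x (P.getVert (k - 1)) := by
      have := P.adj_getVert_succ (i := k - 1) (by omega)
      have heq : k - 1 + 1 = k := by omega
      rw [heq, hgx] at this
      exact this.symm
    have hnextadj : G.Adj x (P.getVert (k + 1)) := by
      have := P.adj_getVert_succ (i := k) (by omega)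
      rwa [hgx] at this
    have hpn : P.getVert (k - 1) ≠ P.getVert (k + 1) := by
      intro h
      have := getVert_inj P hP (i := k - 1) (j := k + 1) (by omega) (by omega) h
      omega
    have hset : P.support.toFinset.filter (fun u => G.Adj x u)
        = {P.getVert (k - 1), P.getVert (k + 1)} := by
      ext u
      simp only [Finset.mem_filter, List.mem_toFinset, Finset.mem_insert, Finset.mem_singleton]
      constructor
      · rintro ⟨humem, hadj⟩
        have hgu : P.getVert (P.support.idxOf u) = u := getVert_eq_indexOf P hP humem
        set m := P.support.idxOf u with hmdef
        have hmle : m ≤ P.length := by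
          have := List.idxOf_lt_length_iff.mpr humem
          omega
        have hmk : m ≠ k := by
          intro h
          apply hadj.ne
          rw [← hgx, ← hgu, h]
        rcases lt_or_gt_of_ne hmk with hlt | hgt
        · by_cases hm : m = k - 1
          · left; rw [← hgu, hm]
          · exfalso
            have hDlen := len_split P hP humem
            refine chord (Y := Y) hdisj hbip hP hPeven hnocycle hnoshort u x humem ?_
              hadj.ne hadj.symm ?_ (Or.inr hxS)
            · rw [support_drop_until P hP humem]
              exact mem_drop_of_le_indexOf hxsupp (by omega)
            · intro heq
              have hD1 : (P.dropUntil u humem).getVert 1 = P.getVert (m + 1) := by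
                rw [getVert_dropUntil P hP humem (by omega)]
              rw [hD1] at heq
              have := indexOf_getVert P hP (i := m + 1) (by omega)
              rw [← heq] at this
              rw [← hkdef] at this
              omega
        · by_cases hm : m = k + 1
          · right; rw [← hgu, hm]
          · exfalso
            have hDlen := len_split P hP hxsupp
            refine chord (Y := Y) hdisj hbip hP hPeven hnocycle hnoshort x u hxsupp ?_
              hadj.ne' hadj ?_ (Or.inl hxS)
            · rw [support_drop_until P hP hxsupp]
              exact mem_drop_of_le_indexOf humem (by omega)
            · intro heq
              have hD1 : (P.dropUntil x hxsupp).getVert 1 = P.getVert (k + 1) := by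
                rw [getVert_dropUntil P hP hxsupp (by omega), ← hkdef]
              rw [hD1] at heq
              have := indexOf_getVert P hP (i := k + 1) (by omega)
              rw [← heq, ← hmdef] at this
              omega
      · rintro (rfl | rfl)
        · exact ⟨getVert_mem_support P (by omega), hprevadj⟩
        · exact ⟨getVert_mem_support P (by omega), hnextadj⟩
    rw [hset]
    exact Finset.card_pair hpn
  · -- d(yp) ≤ 2
    set F := P.support.toFinset.filter (fun u => G.Adj yp u) with hF
    have hsub : F ⊆ insert xp (F.erase xp) := by
      intro a ha
      by_cases h : a = xp
      · rw [h]; exact Finset.mem_insert_self _ _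
      · exact Finset.mem_insert_of_mem (Finset.mem_erase.mpr ⟨h, ha⟩)
    have hcard1 : (F.erase xp).card ≤ 1 := by
      rw [Finset.card_le_one]
      intro a ha b hb
      rw [Finset.mem_erase, hF, Finset.mem_filter, List.mem_toFinset] at ha hb
      have hane := ha.1
      have hamem := ha.2.1
      have haadj := ha.2.2
      have hbne := hb.1
      have hbmem := hb.2.1
      have hbadj := hb.2.2
      by_contra hab
      have hidxne : P.support.idxOf a ≠ P.support.idxOf b := by
        intro h
        apply hab
        rw [← getVert_eq_indexOf P hP hamem, h, getVert_eq_indexOf P hP hbmem]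
      rcases lt_or_gt_of_ne hidxne with h | h
      · exact two_extras_lt hdisj hbip hP hPeven hsplit hxp hnocycle hnoshort hxpi hllen
          hn3 hx₁X hypX a b hamem hbmem haadj hbadj hane hbne h
      · exact two_extras_lt hdisj hbip hP hPeven hsplit hxp hnocycle hnoshort hxpi hllen
          hn3 hx₁X hypX b a hbmem hamem hbadj haadj hbne hane h
    calc F.card ≤ (insert xp (F.erase xp)).card := Finset.card_le_card hsub
      _ ≤ (F.erase xp).card + 1 := Finset.card_insert_le _ _
      _ ≤ 2 := by omega
end

section
/- Let G be a balanced bipartite graph of order 2n with bipartition (X,Y), let x ∈ X have exactly one neighbor in Y, and suppose G[X \ {x}, Y] is complete bipartite. Let S ⊆ X with x ∈ S. Then every nonadjacent pair u ∈ S, y ∈ Y satisfies d(u) + d(y) ≥ n, but for every positive integer k, G does not contain k disjoint cycles covering S each with at least two vertices of S (since no cycle of G passes through x). -/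
lemma cycle_two_le_degree {V : Type*} [Fintype V] [DecidableEq V]
    (G : SimpleGraph V) [DecidableRel G.Adj] {x : V} {c : G.Walk x x}
    (hc : c.IsCycle) : 2 ≤ G.degree x := by
  have hnil := hc.not_nil
  rw [SimpleGraph.Walk.not_nil_iff] at hnil
  obtain ⟨w, h, p, rfl⟩ := hnil
  rw [SimpleGraph.Walk.cons_isCycle_iff] at hc
  obtain ⟨hp, hedge⟩ := hc
  -- p : Walk w x, get last edge via reverse
  have hplen : 0 < p.length := by
    rcases Nat.eq_zero_or_pos p.length with h0 | h0
    · exfalso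
      have := (SimpleGraph.Walk.eq_of_length_eq_zero h0)
      exact (G.irrefl (this ▸ h))
    · exact h0
  have hrev : ¬ p.reverse.Nil := by
    rw [SimpleGraph.Walk.not_nil_iff_lt_length, SimpleGraph.Walk.length_reverse]
    exact hplen
  rw [SimpleGraph.Walk.not_nil_iff] at hrev
  obtain ⟨z, h', q, hq⟩ := hrev
  have hzx : G.Adj x z := h'
  have hmem : s(x, z) ∈ p.edges := by
    have : s(x, z) ∈ p.reverse.edges := by
      rw [hq]; exact List.mem_cons_self
    rwa [SimpleGraph.Walk.edges_reverse, List.mem_reverse] at this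
  have hzw : z ≠ w := by
    rintro rfl
    exact hedge hmem
  have hsub : ({w, z} : Finset V) ⊆ G.neighborFinset x := by
    intro a ha
    simp only [Finset.mem_insert, Finset.mem_singleton] at ha
    rcases ha with rfl | rfl
    · exact (SimpleGraph.mem_neighborFinset _ _ _).2 h
    · exact (SimpleGraph.mem_neighborFinset _ _ _).2 hzx
  have : ({w, z} : Finset V).card ≤ G.degree x := by
    rw [SimpleGraph.degree]; exact Finset.card_le_card hsub
  rwa [Finset.card_insert_of_notMem (by simpa using hzw.symm), Finset.card_singleton] at this

/-- Example 3: if x ∈ X has exactly one neighbor and G[X \ {x}, Y] is complete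
bipartite, with x ∈ S ⊆ X, then every nonadjacent pair u ∈ S, y ∈ Y satisfies
d(u) + d(y) ≥ n, yet for no positive k does G contain k disjoint cycles
covering S each with at least two S-vertices. -/
theorem degree_n_not_sufficient {V : Type*} [Fintype V] [DecidableEq V]
    (G : SimpleGraph V) [DecidableRel G.Adj]
    (X Y S : Finset V) (n : ℕ) (hn : 2 ≤ n)
    (hdisj : Disjoint X Y) (hcover : X ∪ Y = Finset.univ)
    (hX : X.card = n) (hY : Y.card = n)
    (hbip : ∀ u v : V, G.Adj u v → (u ∈ X ∧ v ∈ Y) ∨ (u ∈ Y ∧ v ∈ X))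
    (x : V) (hx : x ∈ X) (hdx : G.degree x = 1)
    (hcomplete : ∀ u ∈ X, u ≠ x → ∀ y ∈ Y, G.Adj u y)
    (hSX : S ⊆ X) (hxS : x ∈ S) :
    (∀ u ∈ S, ∀ y ∈ Y, ¬ G.Adj u y → n ≤ G.degree u + G.degree y) ∧
    (∀ k : ℕ, 0 < k →
      ¬ ∃ (v : Fin k → V) (c : ∀ i, G.Walk (v i) (v i)),
          (∀ i, (c i).IsCycle) ∧
          (∀ i j, i ≠ j → Disjoint (c i).support.toFinset (c j).support.toFinset) ∧
          (∀ i, 2 ≤ (S ∩ (c i).support.toFinset).card) ∧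
          (∀ s ∈ S, ∃ i, s ∈ (c i).support)) := by
  constructor
  · intro u hu y hy hna
    have huX : u ∈ X := hSX hu
    by_cases hux : u = x
    · subst hux
      have hsub : X.erase u ⊆ G.neighborFinset y := by
        intro a ha
        rw [SimpleGraph.mem_neighborFinset]
        exact ((hcomplete a (Finset.mem_of_mem_erase ha)
          (Finset.ne_of_mem_erase ha) y hy)).symm
      have hcard : n - 1 ≤ G.degree y := by
        have := Finset.card_le_card hsub
        rwa [Finset.card_erase_of_mem huX, hX] at this
      rw [hdx]
      omega
    · exact absurd (hcomplete u huX hux y hy) hna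
  · rintro k hk ⟨v, c, hcyc, hdisjc, hcard2, hcov⟩
    obtain ⟨i, hxi⟩ := hcov x hxS
    have hrot : ((c i).rotate x hxi).IsCycle := (hcyc i).rotate hxi
    have := cycle_two_le_degree G hrot
    omega
end
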